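/- (Variation of parameters, case 3 ≤ k ≤ n−1.) Let k be an integer with 3 ≤ k ≤ n−1, let f_{k+1} : U → ℝ be a given continuous function, let b_k ∈ ℝ, let B_k : U → ℝ be differentiable, set h_k(u) := ((n−1)/(n−2))^{k−1}·|F(u)|^{(k−n)/(n−2)}·(F'(u))^{k−1}, and define f_k := (b_k + B_k)·h_k. Then f_k satisfies f_k'·g + (k+1)·a·f_{k+1}·g + (k−1)·f_k·g' + (2−k)·f_k = 0 on U if and only if B_k'(u) = −(k+1)·a·f_{k+1}(u)·((n−1)/(n−2))^{1−k}·|F(u)|^{(n−k)/(n−2)}·(F'(u))^{1−k} for all u ∈ U. -/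

import Mathlib

/-- The function `g = ((n−2)F)/((n−1)F')`. -/
noncomputable def gFun (n : ℕ) (F : ℝ → ℝ) (u : ℝ) : ℝ :=
  (((n : ℝ) - 2) * F u) / (((n : ℝ) - 1) * deriv F u)

/-- The solution `h_k` of the homogeneous equation. -/
noncomputable def hFun (n : ℕ) (F : ℝ → ℝ) (k : ℕ) (u : ℝ) : ℝ :=
  (((n : ℝ) - 1) / ((n : ℝ) - 2)) ^ ((k : ℤ) - 1)
    * |F u| ^ ((((k : ℝ) - (n : ℝ)) / ((n : ℝ) - 2)))
    * (deriv F u) ^ ((k : ℤ) - 1)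

theorem stmt15 (n : ℕ) (hn : 4 ≤ n) (a : ℝ)
    (U : Set ℝ) (hU : IsOpen U) (hUc : U.OrdConnected)
    (F : ℝ → ℝ)
    (hF₁ : ∀ u ∈ U, DifferentiableAt ℝ F u)
    (hF₂ : ∀ u ∈ U, DifferentiableAt ℝ (deriv F) u)
    (hFne : ∀ u ∈ U, F u ≠ 0)
    (hF'pos : ∀ u ∈ U, 0 < deriv F u)
    (k : ℕ) (hk3 : 3 ≤ k) (hkn : k ≤ n - 1)
    (fk1 : ℝ → ℝ) (hfk1 : ContinuousOn fk1 U)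
    (bk : ℝ) (Bk : ℝ → ℝ) (hBk : ∀ u ∈ U, DifferentiableAt ℝ Bk u) :
    (∀ u ∈ U,
      deriv (fun x => (bk + Bk x) * hFun n F k x) u * gFun n F u
        + ((k : ℝ) + 1) * a * fk1 u * gFun n F u
        + ((k : ℝ) - 1) * ((bk + Bk u) * hFun n F k u) * deriv (gFun n F) u
        + (2 - (k : ℝ)) * ((bk + Bk u) * hFun n F k u) = 0) ↔
    (∀ u ∈ U,
      deriv Bk u = -((k : ℝ) + 1) * a * fk1 u
        * (((n : ℝ) - 1) / ((n : ℝ) - 2)) ^ ((1 : ℤ) - (k : ℤ))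
        * |F u| ^ ((((n : ℝ) - (k : ℝ)) / ((n : ℝ) - 2)))
        * (deriv F u) ^ ((1 : ℤ) - (k : ℤ))) := by
  have hn4 : (4:ℝ) ≤ (n:ℝ) := by exact_mod_cast hn
  have hn2 : ((n:ℝ) - 2) ≠ 0 := by nlinarith
  have hn1 : ((n:ℝ) - 1) ≠ 0 := by nlinarith
  have hcpos : (0:ℝ) < ((n:ℝ)-1)/((n:ℝ)-2) := by
    apply div_pos <;> nlinarith
  refine forall₂_congr fun u hu => ?_
  have hp : F u ≠ 0 := hFne u hu
  have hq : 0 < deriv F u := hF'pos u hu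
  have hq' : deriv F u ≠ 0 := ne_of_gt hq
  set r : ℝ := ((k:ℝ) - (n:ℝ))/((n:ℝ)-2) with hrdef
  set c : ℝ := ((n:ℝ)-1)/((n:ℝ)-2) with hcdef
  -- derivative of |F|^r at u
  have hA : HasDerivAt (fun x => |F x| ^ r) (r * |F u| ^ r * deriv F u / F u) u := by
    rcases hp.lt_or_gt with hneg | hpos
    · have hev : ∀ᶠ x in nhds u, F x < 0 :=
        (hF₁ u hu).continuousAt.eventually_lt continuousAt_const hneg
      have heq : (fun x => |F x| ^ r) =ᶠ[nhds u] fun x => (-F x) ^ r :=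
        hev.mono fun x hx => by simp only []; rw [abs_of_neg hx]
      have hd : HasDerivAt (fun x => (-F x) ^ r) (r * |F u| ^ r * deriv F u / F u) u := by
        have h1 := HasDerivAt.comp u
          (Real.hasDerivAt_rpow_const (x := -F u) (p := r) (Or.inl (by simpa using hp)))
          ((hF₁ u hu).hasDerivAt.neg)
        have h2 : HasDerivAt (fun x => (-F x) ^ r) (r * (-F u) ^ (r - 1) * -deriv F u) u := by
          simpa [Function.comp_def] using h1
        convert h2 using 1
        rw [abs_of_neg hneg, Real.rpow_sub_one (by simpa using hp)]
        field_simp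
      exact hd.congr_of_eventuallyEq heq
    · have hev : ∀ᶠ x in nhds u, 0 < F x :=
        continuousAt_const.eventually_lt (hF₁ u hu).continuousAt hpos
      have heq : (fun x => |F x| ^ r) =ᶠ[nhds u] fun x => (F x) ^ r :=
        hev.mono fun x hx => by simp only []; rw [abs_of_pos hx]
      have hd : HasDerivAt (fun x => (F x) ^ r) (r * |F u| ^ r * deriv F u / F u) u := by
        have h1 := HasDerivAt.comp u
          (Real.hasDerivAt_rpow_const (x := F u) (p := r) (Or.inl hp))
          ((hF₁ u hu).hasDerivAt)
        have h2 : HasDerivAt (fun x => (F x) ^ r) (r * (F u) ^ (r - 1) * deriv F u) u := by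
          simpa [Function.comp_def] using h1
        convert h2 using 1
        rw [abs_of_pos hpos, Real.rpow_sub_one hp]
        field_simp
      exact hd.congr_of_eventuallyEq heq
  -- derivative of (deriv F)^(k-1) at u
  have hB : HasDerivAt (fun x => deriv F x ^ ((k:ℤ)-1))
      (((k:ℝ)-1) * deriv F u ^ ((k:ℤ)-1-1) * deriv (deriv F) u) u := by
    have h1 := HasDerivAt.comp u
      (hasDerivAt_zpow ((k:ℤ)-1) (deriv F u) (Or.inl hq')) (hF₂ u hu).hasDerivAt
    have h2 : HasDerivAt (fun x => deriv F x ^ ((k:ℤ)-1))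
        ((((k:ℤ)-1 : ℤ) : ℝ) * deriv F u ^ ((k:ℤ)-1-1) * deriv (deriv F) u) u := by
      simpa [Function.comp_def, mul_assoc] using h1
    convert h2 using 2
    push_cast; ring
  -- derivative of hFun at u
  have hH : HasDerivAt (fun x => c ^ ((k:ℤ)-1) * |F x| ^ r * deriv F x ^ ((k:ℤ)-1))
      ((c ^ ((k:ℤ)-1) * (r * |F u| ^ r * deriv F u / F u)) * deriv F u ^ ((k:ℤ)-1)
        + (c ^ ((k:ℤ)-1) * |F u| ^ r) * (((k:ℝ)-1) * deriv F u ^ ((k:ℤ)-1-1) * deriv (deriv F) u)) u :=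
    (hA.const_mul _).mul hB
  have hhfun : hFun n F k = fun x => c ^ ((k:ℤ)-1) * |F x| ^ r * deriv F x ^ ((k:ℤ)-1) := rfl
  have hgfun : gFun n F = fun x => (((n:ℝ)-2) * F x) / (((n:ℝ)-1) * deriv F x) := rfl
  have hfull : HasDerivAt (fun x => (bk + Bk x) * (c ^ ((k:ℤ)-1) * |F x| ^ r * deriv F x ^ ((k:ℤ)-1)))
      ((0 + deriv Bk u) * (c ^ ((k:ℤ)-1) * |F u| ^ r * deriv F u ^ ((k:ℤ)-1))
        + (bk + Bk u) * ((c ^ ((k:ℤ)-1) * (r * |F u| ^ r * deriv F u / F u)) * deriv F u ^ ((k:ℤ)-1)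
        + (c ^ ((k:ℤ)-1) * |F u| ^ r) * (((k:ℝ)-1) * deriv F u ^ ((k:ℤ)-1-1) * deriv (deriv F) u))) u :=
    ((hasDerivAt_const u bk).add (hBk u hu).hasDerivAt).mul hH
  have hg : HasDerivAt (fun x => (((n:ℝ)-2) * F x) / (((n:ℝ)-1) * deriv F x))
      (((((n:ℝ)-2) * deriv F u) * (((n:ℝ)-1) * deriv F u)
        - (((n:ℝ)-2) * F u) * (((n:ℝ)-1) * deriv (deriv F) u)) / (((n:ℝ)-1) * deriv F u) ^ 2) u :=
    ((hF₁ u hu).hasDerivAt.const_mul _).div ((hF₂ u hu).hasDerivAt.const_mul _)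
      (mul_ne_zero hn1 hq')
  simp only [hhfun, hgfun]
  rw [hfull.deriv, hg.deriv]
  -- rewrite inverse powers
  have e1 : c ^ ((1:ℤ) - (k:ℤ)) = (c ^ ((k:ℤ)-1))⁻¹ := by
    rw [show (1:ℤ) - (k:ℤ) = -((k:ℤ)-1) by ring, zpow_neg]
  have e2 : deriv F u ^ ((1:ℤ) - (k:ℤ)) = (deriv F u ^ ((k:ℤ)-1))⁻¹ := by
    rw [show (1:ℤ) - (k:ℤ) = -((k:ℤ)-1) by ring, zpow_neg]
  have e3 : |F u| ^ (((n:ℝ) - (k:ℝ))/((n:ℝ)-2)) = (|F u| ^ r)⁻¹ := by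
    rw [show ((n:ℝ) - (k:ℝ))/((n:ℝ)-2) = -r by rw [hrdef]; ring, Real.rpow_neg (abs_nonneg _)]
  have e4 : deriv F u ^ ((k:ℤ)-1-1) = deriv F u ^ ((k:ℤ)-1) / deriv F u := by
    rw [zpow_sub_one₀ hq', div_eq_mul_inv]
  rw [e1, e2, e3, e4]
  have hApos : (0:ℝ) < |F u| ^ r := Real.rpow_pos_of_pos (abs_pos.mpr hp) r
  have hQne : deriv F u ^ ((k:ℤ)-1) ≠ 0 := zpow_ne_zero _ hq'
  have hCne : c ^ ((k:ℤ)-1) ≠ 0 := zpow_ne_zero _ (ne_of_gt hcpos)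
  set A : ℝ := |F u| ^ r with hAdef
  set Q : ℝ := deriv F u ^ ((k:ℤ)-1) with hQdef
  set Cc : ℝ := c ^ ((k:ℤ)-1) with hCdef
  set V : ℝ := -((k : ℝ) + 1) * a * fk1 u * Cc⁻¹ * A⁻¹ * Q⁻¹ with hVdef
  set W : ℝ := Cc * A * Q * ((((n:ℝ)-2) * F u) / (((n:ℝ)-1) * deriv F u)) with hWdef
  have hWne : W ≠ 0 := by
    apply mul_ne_zero (mul_ne_zero (mul_ne_zero hCne (ne_of_gt hApos)) hQne)
    exact div_ne_zero (mul_ne_zero hn2 hp) (mul_ne_zero hn1 hq')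
  have key : ((0 + deriv Bk u) * (Cc * A * Q) +
                (bk + Bk u) *
                  (Cc * (r * A * deriv F u / F u) * Q + Cc * A * (((k:ℝ) - 1) * (Q / deriv F u) * deriv (deriv F) u))) *
              (((n:ℝ) - 2) * F u / (((n:ℝ) - 1) * deriv F u)) +
            ((k:ℝ) + 1) * a * fk1 u * (((n:ℝ) - 2) * F u / (((n:ℝ) - 1) * deriv F u)) +
          ((k:ℝ) - 1) * ((bk + Bk u) * (Cc * A * Q)) *
            ((((n:ℝ) - 2) * deriv F u * (((n:ℝ) - 1) * deriv F u) - ((n:ℝ) - 2) * F u * (((n:ℝ) - 1) * deriv (deriv F) u)) /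
              (((n:ℝ) - 1) * deriv F u) ^ 2) +
        (2 - (k:ℝ)) * ((bk + Bk u) * (Cc * A * Q)) = (deriv Bk u - V) * W := by
    rw [hVdef, hWdef, hrdef]
    field_simp
    ring
  rw [key, mul_eq_zero, sub_eq_zero]
  exact or_iff_left hWne
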